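/- Let P, P̃ be probability mass functions on a finite set related by P(x) = (1/Z) P̆(x) P̃(x) for a normalizer Z, where P̆ is a probability mass function. Suppose |P̆(x_i | x_{A'}) − 1/2| < ε̆ < 1/4 for all x_i ∈ {−1,1} and all x_{A'} (with P̆(x_i) = 1/2). Then for all x_i, x_{A'}: ((1−2ε̆)/(1+2ε̆))·P̃(x_i | x_{A'}) < P(x_i | x_{A'}) < ((1+2ε̆)/(1−2ε̆))·P̃(x_i | x_{A'}), and consequently |P(x_i|x_{A'}) − P̃(x_i|x_{A'})| < 8ε̆. -/
import Mathlib

set_option maxHeartbeats 1000000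

/-- If `P ∝ P̆ · P̃` pointwise, `P̆(x_i) = 1/2`, and `|P̆(x_i | x_{A'}) − 1/2| < ε̆ < 1/4`
for all binary `x_i` (encoded by `Bool`) and all `x_{A'}`, then
`((1−2ε̆)/(1+2ε̆)) P̃(x_i|x_{A'}) < P(x_i|x_{A'}) < ((1+2ε̆)/(1−2ε̆)) P̃(x_i|x_{A'})`, and
consequently `|P(x_i|x_{A'}) − P̃(x_i|x_{A'})| < 8 ε̆`. -/
theorem stmt_16 {α : Type*} [Fintype α]
    (P Pb Pt : Bool × α → ℝ) (Z ε : ℝ)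
    (hPb0 : ∀ z, 0 < Pb z) (hPt0 : ∀ z, 0 < Pt z)
    (hPb1 : ∑ z, Pb z = 1) (hPt1 : ∑ z, Pt z = 1)
    (hZ : Z = ∑ z, Pb z * Pt z)
    (hP : ∀ z, P z = Pb z * Pt z / Z)
    (hε : ε < 1 / 4)
    (hmarg : ∀ xi : Bool, ∑ xA, Pb (xi, xA) = 1 / 2)
    (hcond : ∀ (xi : Bool) (xA : α), |Pb (xi, xA) / (∑ b, Pb (b, xA)) - 1 / 2| < ε) :
    ∀ (xi : Bool) (xA : α),
      ((1 - 2 * ε) / (1 + 2 * ε)) * (Pt (xi, xA) / ∑ b, Pt (b, xA)) <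
          P (xi, xA) / ∑ b, P (b, xA) ∧
        P (xi, xA) / ∑ b, P (b, xA) <
          ((1 + 2 * ε) / (1 - 2 * ε)) * (Pt (xi, xA) / ∑ b, Pt (b, xA)) ∧
        |P (xi, xA) / (∑ b, P (b, xA)) - Pt (xi, xA) / ∑ b, Pt (b, xA)| < 8 * ε := by
  classical
  have hne : Nonempty α := by
    by_contra h
    rw [not_nonempty_iff] at h
    simp [Finset.univ_eq_empty] at hPt1
  have hZ0 : 0 < Z := by
    rw [hZ]
    exact Finset.sum_pos (fun z _ => mul_pos (hPb0 z) (hPt0 z)) Finset.univ_nonempty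
  intro xi xA
  have hsum : ∀ g : Bool → ℝ, ∑ b, g b = g xi + g (!xi) := by
    intro g; cases xi <;> simp [Fintype.sum_bool, add_comm]
  set a := Pb (xi, xA) with ha
  set b := Pb (!xi, xA) with hb
  set p := Pt (xi, xA) with hpdef
  set q := Pt (!xi, xA) with hqdef
  have hap : 0 < a := hPb0 _
  have hbp : 0 < b := hPb0 _
  have hp : 0 < p := hPt0 _
  have hq : 0 < q := hPt0 _
  have hs : 0 < a + b := by linarith
  have hpq : 0 < p + q := by linarith
  have hsb : ∑ b', Pb (b', xA) = a + b := hsum (fun b' => Pb (b', xA))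
  have hst : ∑ b', Pt (b', xA) = p + q := hsum (fun b' => Pt (b', xA))
  have hc1 := hcond xi xA
  have hc2 := hcond (!xi) xA
  rw [hsb, abs_lt] at hc1 hc2
  have hε0 : 0 < ε := lt_of_le_of_lt (abs_nonneg (a / (a+b) - 1/2)) (abs_lt.mpr hc1)
  have ha1 : (1/2 - ε) * (a + b) < a := (lt_div_iff₀ hs).mp (by linarith [hc1.1])
  have ha2 : a < (1/2 + ε) * (a + b) := (div_lt_iff₀ hs).mp (by linarith [hc1.2])
  have hb1 : (1/2 - ε) * (a + b) < b := (lt_div_iff₀ hs).mp (by linarith [hc2.1])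
  have hb2 : b < (1/2 + ε) * (a + b) := (div_lt_iff₀ hs).mp (by linarith [hc2.2])
  have hε4 : 0 < 1 - 2 * ε := by linarith
  have hε5 : 0 < 1 + 2 * ε := by linarith
  have hD : 0 < a * p + b * q := by positivity
  -- conditional of P
  have h1 : ∑ b', P (b', xA) = (a * p + b * q) / Z := by
    rw [hsum (fun b' => P (b', xA))]
    simp only [hP]
    ring
  have h2 : P (xi, xA) / ∑ b', P (b', xA) = a * p / (a * p + b * q) := by
    rw [h1, hP]
    rw [div_div_div_eq]
    rw [mul_comm (Pb (xi, xA) * Pt (xi, xA)) Z, mul_div_mul_left _ _ (ne_of_gt hZ0)]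
  have hX : a * p + b * q < (1/2 + ε) * (a + b) * (p + q) := by
    nlinarith [mul_lt_mul_of_pos_right ha2 hp, mul_lt_mul_of_pos_right hb2 hq]
  have hX2 : (1/2 - ε) * (a + b) * (p + q) < a * p + b * q := by
    nlinarith [mul_lt_mul_of_pos_right ha1 hp, mul_lt_mul_of_pos_right hb1 hq]
  have hY : (1/2 - ε) * (a + b) * (p + q) < a * (p + q) :=
    mul_lt_mul_of_pos_right ha1 hpq
  have hY2 : a * (p + q) < (1/2 + ε) * (a + b) * (p + q) :=
    mul_lt_mul_of_pos_right ha2 hpq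
  have hD' : 0 < (1 + 2 * ε) * (p + q) := by positivity
  have hD'' : 0 < (1 - 2 * ε) * (p + q) := by positivity
  rw [h2, hst]
  refine ⟨?_, ?_, ?_⟩
  · rw [div_mul_div_comm, div_lt_div_iff₀ hD' hD]
    have k1 := mul_lt_mul_of_pos_left hX (mul_pos hε4 hp)
    have k2 := mul_lt_mul_of_pos_left hY (mul_pos hε5 hp)
    nlinarith [k1, k2]
  · rw [div_mul_div_comm, div_lt_div_iff₀ hD hD'']
    have k1 := mul_lt_mul_of_pos_left hY2 (mul_pos hε4 hp)
    have k2 := mul_lt_mul_of_pos_left hX2 (mul_pos hε5 hp)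
    nlinarith [k1, k2]
  · have hdiff : a * p / (a * p + b * q) - p / (p + q)
        = p * q * (a - b) / ((a * p + b * q) * (p + q)) := by
      field_simp
      ring
    rw [hdiff, abs_div, abs_of_pos (mul_pos hD hpq), abs_mul,
      abs_of_pos (mul_pos hp hq), div_lt_iff₀ (mul_pos hD hpq)]
    have habs : |a - b| < 2 * ε * (a + b) := abs_lt.mpr ⟨by linarith, by linarith⟩
    have h3a : p * q * |a - b| < p * q * (2 * ε * (a + b)) :=
      mul_lt_mul_of_pos_left habs (mul_pos hp hq)
    have h3b : p * q ≤ (p + q) * (p + q) / 4 := by nlinarith [sq_nonneg (p - q)]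
    have hM : 0 < (a + b) * ((p + q) * (p + q)) := by positivity
    nlinarith [h3a, mul_le_mul_of_nonneg_right h3b (by positivity : (0:ℝ) ≤ 2 * ε * (a + b)),
      mul_lt_mul_of_pos_left hX2 (by positivity : (0:ℝ) < 8 * ε),
      mul_pos hε0 hM, mul_pos (mul_pos hε0 (by linarith : (0:ℝ) < 1/4 - ε)) hM]
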